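/- Consider the Ising distribution on σ ∈ {-1,+1}^{d+1} with P(σ) ∝ exp(Σ_{i<j} θ_{ij} σ_i σ_j), where all couplings satisfy θ_{ij} ≥ 0 and θ_{ij} ≤ β, and the all-plus configuration has energy at least β(d²-1)/2. Then P(|Σ_i σ_i| ≤ d/3 + 1) ≤ d·(3e)^{d/3+1}·exp(-β·d·(d-3)/3). -/

import Mathlib

open Finset

lemma swap_sum {n : ℕ} (f : Fin n → Fin n → ℝ) :
    ∑ i, ∑ j ∈ univ.filter (fun j => j < i), f i j
      = ∑ i, ∑ j ∈ univ.filter (fun j => i < j), f j i := by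
  calc ∑ i, ∑ j ∈ univ.filter (fun j => j < i), f i j
      = ∑ i, ∑ j, if j < i then f i j else 0 := by
        simp [Finset.sum_filter]
    _ = ∑ j, ∑ i, if j < i then f i j else 0 := Finset.sum_comm
    _ = ∑ j, ∑ i ∈ univ.filter (fun i => j < i), f i j := by
        simp [Finset.sum_filter]

lemma sq_sum_spin {n : ℕ} (s : Fin n → ℝ) (hs : ∀ i, s i * s i = 1) :
    (∑ i, s i) ^ 2 = n + 2 * ∑ i, ∑ j ∈ univ.filter (fun j => i < j), s i * s j := by
  have hsplit : ∀ i : Fin n, ∑ j, s i * s j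
      = (∑ j ∈ univ.filter (fun j => i < j), s i * s j)
        + ((∑ j ∈ univ.filter (fun j => j < i), s i * s j) + s i * s i) := by
    intro i
    rw [← Finset.sum_filter_add_sum_filter_not univ (fun j => i < j) (fun j => s i * s j)]
    congr 1
    have : univ.filter (fun j => ¬ i < j) = insert i (univ.filter (fun j => j < i)) := by
      ext j
      simp only [Finset.mem_filter, Finset.mem_univ, true_and, Finset.mem_insert, not_lt]
      constructor
      · intro h
        rcases lt_or_eq_of_le h with h | h
        · exact Or.inr h
        · exact Or.inl h
      · rintro (rfl | h)
        · exact le_refl _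
        · exact le_of_lt h
    rw [this, Finset.sum_insert (by simp)]
    ring
  have h1 : (∑ i, s i) ^ 2 = ∑ i, ∑ j, s i * s j := by
    rw [sq, Finset.sum_mul_sum]
  rw [h1]
  simp_rw [hsplit]
  rw [Finset.sum_add_distrib, Finset.sum_add_distrib]
  have h2 : ∑ i, ∑ j ∈ univ.filter (fun j => j < i), s i * s j
      = ∑ i, ∑ j ∈ univ.filter (fun j => i < j), s i * s j := by
    rw [swap_sum]
    simp [mul_comm]
  have h3 : ∑ i : Fin n, s i * s i = n := by
    simp [hs]
  rw [h2, h3]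
  ring

set_option maxHeartbeats 1000000

theorem stmt_18 (d : ℕ) (hd : 1 ≤ d) (β : ℝ) (hβ : 0 < β)
    (θ : Fin (d + 1) → Fin (d + 1) → ℝ)
    (hnn : ∀ i j, 0 ≤ θ i j) (hub : ∀ i j, θ i j ≤ β)
    (spin : Bool → ℝ) (hspin : spin = fun b => if b then 1 else -1)
    (w : (Fin (d + 1) → Bool) → ℝ)
    (hw : w = fun σ => Real.exp (∑ i, ∑ j ∈ univ.filter (fun j => i < j),
      θ i j * spin (σ i) * spin (σ j)))
    (hplus : β * ((d : ℝ) ^ 2 - 1) / 2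
      ≤ ∑ i, ∑ j ∈ univ.filter (fun j => i < j), θ i j) :
    (∑ σ ∈ univ.filter (fun σ : Fin (d + 1) → Bool =>
        |∑ i, spin (σ i)| ≤ (d : ℝ) / 3 + 1), w σ) / (∑ σ, w σ)
      ≤ d * (3 * Real.exp 1) ^ ((d : ℝ) / 3 + 1) * Real.exp (-β * d * (d - 3) / 3) := by
  have hspin1 : ∀ b, spin b * spin b = 1 := by
    intro b; rw [hspin]; cases b <;> norm_num
  have hspin_ge : ∀ a b, (-1 : ℝ) ≤ spin a * spin b := by
    intro a b; rw [hspin]; cases a <;> cases b <;> norm_num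
  set S : ℝ := ∑ i, ∑ j ∈ univ.filter (fun j => i < j), θ i j with hSdef
  set Num : ℝ := ∑ σ ∈ univ.filter (fun σ : Fin (d + 1) → Bool =>
      |∑ i, spin (σ i)| ≤ (d : ℝ) / 3 + 1), w σ with hNum
  set Z : ℝ := ∑ σ, w σ with hZdef
  have hwpos : ∀ σ, 0 < w σ := by intro σ; rw [hw]; exact Real.exp_pos _
  have hZpos : 0 < Z := Finset.sum_pos (fun σ _ => hwpos σ) univ_nonempty
  have hNumnn : 0 ≤ Num := Finset.sum_nonneg (fun σ _ => (hwpos σ).le)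
  have hZ : Real.exp S ≤ Z := by
    have h1 : w (fun _ => true) = Real.exp S := by
      rw [hw, hspin]
      simp
      rfl
    rw [← h1]
    exact Finset.single_le_sum (fun σ _ => (hwpos σ).le) (mem_univ _)
  have hpairs : (∑ i : Fin (d + 1), ∑ j ∈ univ.filter (fun j => i < j), (1 : ℝ))
      = (((d : ℝ) + 1) ^ 2 - ((d : ℝ) + 1)) / 2 := by
    have := sq_sum_spin (n := d + 1) (fun _ => (1 : ℝ)) (fun _ => by norm_num)
    simp only [mul_one] at this
    rw [Finset.sum_const, Finset.card_univ, Fintype.card_fin, nsmul_eq_mul, mul_one] at this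
    push_cast at this ⊢
    linarith
  -- per-configuration energy bound
  have hE : ∀ σ : Fin (d + 1) → Bool, |∑ i, spin (σ i)| ≤ (d : ℝ) / 3 + 1 →
      w σ ≤ Real.exp (β * (((d : ℝ) / 3 + 1) ^ 2 + (d : ℝ) ^ 2 - 1) / 2 - S) := by
    intro σ hm
    rw [hw]
    apply Real.exp_le_exp.mpr
    set m : ℝ := ∑ i, spin (σ i) with hmdef
    have hP : ∑ i, ∑ j ∈ univ.filter (fun j => i < j), spin (σ i) * spin (σ j)
        = (m ^ 2 - ((d : ℝ) + 1)) / 2 := by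
      have := sq_sum_spin (n := d + 1) (fun i => spin (σ i)) (fun i => hspin1 _)
      push_cast at this
      linarith
    have step1 : (∑ i, ∑ j ∈ univ.filter (fun j => i < j),
          θ i j * spin (σ i) * spin (σ j)) + S
        ≤ β * ∑ i, ∑ j ∈ univ.filter (fun j => i < j),
            (spin (σ i) * spin (σ j) + 1) := by
      rw [hSdef, ← Finset.sum_add_distrib, Finset.mul_sum]
      apply Finset.sum_le_sum
      intro i _
      rw [← Finset.sum_add_distrib, Finset.mul_sum]
      apply Finset.sum_le_sum
      intro j _
      have h1 : θ i j * spin (σ i) * spin (σ j) + θ i j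
          = θ i j * (spin (σ i) * spin (σ j) + 1) := by ring
      rw [h1]
      exact mul_le_mul_of_nonneg_right (hub i j) (by linarith [hspin_ge (σ i) (σ j)])
    have step2 : ∑ i, ∑ j ∈ univ.filter (fun j => i < j),
          (spin (σ i) * spin (σ j) + 1)
        = (m ^ 2 + (d : ℝ) ^ 2 - 1) / 2 := by
      simp only [Finset.sum_add_distrib]
      rw [hP, hpairs]
      push_cast
      ring
    have hm2 : m ^ 2 ≤ ((d : ℝ) / 3 + 1) ^ 2 := by
      have := abs_le.mp hm
      nlinarith [this.1, this.2]
    have : β * ((m ^ 2 + (d : ℝ) ^ 2 - 1) / 2)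
        ≤ β * ((((d : ℝ) / 3 + 1) ^ 2 + (d : ℝ) ^ 2 - 1) / 2) := by
      apply mul_le_mul_of_nonneg_left _ hβ.le
      linarith
    rw [step2] at step1
    linarith [step1]
  by_cases hd2 : 2 ≤ d
  · -- main case
    have hdR : (2 : ℝ) ≤ (d : ℝ) := by exact_mod_cast hd2
    have hcard : (Num : ℝ) ≤ (2 : ℝ) ^ (d + 1)
        * Real.exp (β * (((d : ℝ) / 3 + 1) ^ 2 + (d : ℝ) ^ 2 - 1) / 2 - S) := by
      rw [hNum]
      calc ∑ σ ∈ univ.filter (fun σ : Fin (d + 1) → Bool =>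
            |∑ i, spin (σ i)| ≤ (d : ℝ) / 3 + 1), w σ
          ≤ ∑ σ ∈ univ.filter (fun σ : Fin (d + 1) → Bool =>
            |∑ i, spin (σ i)| ≤ (d : ℝ) / 3 + 1),
              Real.exp (β * (((d : ℝ) / 3 + 1) ^ 2 + (d : ℝ) ^ 2 - 1) / 2 - S) := by
            apply Finset.sum_le_sum
            intro σ hσ
            exact hE σ (Finset.mem_filter.mp hσ).2
        _ ≤ (2 : ℝ) ^ (d + 1)
            * Real.exp (β * (((d : ℝ) / 3 + 1) ^ 2 + (d : ℝ) ^ 2 - 1) / 2 - S) := by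
            rw [Finset.sum_const, nsmul_eq_mul]
            apply mul_le_mul_of_nonneg_right _ (Real.exp_pos _).le
            have h1 : (univ.filter (fun σ : Fin (d + 1) → Bool =>
                |∑ i, spin (σ i)| ≤ (d : ℝ) / 3 + 1)).card ≤ 2 ^ (d + 1) := by
              calc _ ≤ (univ : Finset (Fin (d + 1) → Bool)).card :=
                    Finset.card_filter_le _ _
                _ = 2 ^ (d + 1) := by simp [Finset.card_univ]
            exact_mod_cast h1
    have hstep : Num / Z ≤ ((2 : ℝ) ^ (d + 1)
        * Real.exp (β * (((d : ℝ) / 3 + 1) ^ 2 + (d : ℝ) ^ 2 - 1) / 2 - S))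
          / Real.exp S :=
      div_le_div₀ (by positivity) hcard (Real.exp_pos _) hZ
    have heq : ((2 : ℝ) ^ (d + 1)
        * Real.exp (β * (((d : ℝ) / 3 + 1) ^ 2 + (d : ℝ) ^ 2 - 1) / 2 - S))
          / Real.exp S
        = (2 : ℝ) ^ (d + 1)
          * Real.exp (β * (((d : ℝ) / 3 + 1) ^ 2 + (d : ℝ) ^ 2 - 1) / 2 - S - S) := by
      rw [mul_div_assoc, ← Real.exp_sub]
    have hexp2 : β * (((d : ℝ) / 3 + 1) ^ 2 + (d : ℝ) ^ 2 - 1) / 2 - S - S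
        ≤ -β * d * ((d : ℝ) - 3) / 3 := by
      have h9 : (0 : ℝ) ≤ (d : ℝ) ^ 2 + 6 * d - 9 := by nlinarith
      nlinarith [mul_nonneg hβ.le h9, hplus]
    have hpow : (2 : ℝ) ^ (d + 1) ≤ (3 * Real.exp 1) ^ ((d : ℝ) / 3 + 1) := by
      have h8 : (8 : ℝ) ≤ 3 * Real.exp 1 := by
        nlinarith [Real.exp_one_gt_d9]
      have hxnn : (0 : ℝ) ≤ (d : ℝ) / 3 + 1 := by positivity
      calc (2 : ℝ) ^ (d + 1) ≤ (2 : ℝ) ^ ((d : ℝ) + 3) := by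
            rw [← Real.rpow_natCast 2 (d + 1)]
            apply Real.rpow_le_rpow_of_exponent_le (by norm_num)
            push_cast; linarith
        _ = (8 : ℝ) ^ ((d : ℝ) / 3 + 1) := by
            rw [show (8 : ℝ) = (2 : ℝ) ^ (3 : ℝ) by
                  rw [show (3:ℝ) = ((3:ℕ):ℝ) by norm_num, Real.rpow_natCast]; norm_num,
              ← Real.rpow_mul (by norm_num)]
            ring_nf
        _ ≤ (3 * Real.exp 1) ^ ((d : ℝ) / 3 + 1) :=
            Real.rpow_le_rpow (by norm_num) h8 hxnn
    calc Num / Z ≤ (2 : ℝ) ^ (d + 1)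
          * Real.exp (β * (((d : ℝ) / 3 + 1) ^ 2 + (d : ℝ) ^ 2 - 1) / 2 - S - S) := by
          rw [← heq]; exact hstep
      _ ≤ (3 * Real.exp 1) ^ ((d : ℝ) / 3 + 1) * Real.exp (-β * d * ((d : ℝ) - 3) / 3) := by
          apply mul_le_mul hpow (Real.exp_le_exp.mpr hexp2) (Real.exp_pos _).le
          positivity
      _ ≤ d * (3 * Real.exp 1) ^ ((d : ℝ) / 3 + 1) * Real.exp (-β * d * ((d : ℝ) - 3) / 3) := by
          have h1 : (1 : ℝ) ≤ (d : ℝ) := by exact_mod_cast hd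
          rw [mul_assoc ((d:ℝ))]
          exact le_mul_of_one_le_left (by positivity) h1
  · -- d = 1
    have hd1 : d = 1 := by omega
    subst hd1
    have hle1 : Num / Z ≤ 1 := by
      apply div_le_one_of_le₀ _ hZpos.le
      apply Finset.sum_le_sum_of_subset_of_nonneg (Finset.filter_subset _ _)
      intro σ _ _; exact (hwpos σ).le
    have hrhs : (1 : ℝ) ≤ 1 * (3 * Real.exp 1) ^ ((1 : ℝ) / 3 + 1)
        * Real.exp (-β * 1 * ((1 : ℝ) - 3) / 3) := by
      rw [one_mul]
      have h1 : (1 : ℝ) ≤ (3 * Real.exp 1) ^ ((1 : ℝ) / 3 + 1) := by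
        apply Real.one_le_rpow _ (by norm_num)
        nlinarith [Real.exp_one_gt_d9]
      have h2 : (1 : ℝ) ≤ Real.exp (-β * 1 * ((1 : ℝ) - 3) / 3) := by
        apply Real.one_le_exp
        nlinarith
      calc (1:ℝ) = 1 * 1 := by ring
        _ ≤ _ := mul_le_mul h1 h2 (by norm_num) (by positivity)
    push_cast
    calc Num / Z ≤ 1 := hle1
      _ ≤ _ := hrhs
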